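/- Let p ≤ 0, δ > 0, c > 0, γ̃ > 1 - δ, and p < q ≤ 1. Suppose h : Ω → (0, 1] is C² on an open Ω ⊆ ℝ^N and its Hessian satisfies D²h ≥ ε h^{1-δ} I for some ε > 0, and D²(K_p ∘ h) ≥ -c h^{p-1+γ̃} I (as symmetric matrices). Then D²(K_q ∘ h) ≥ (ε (q-p)/(1-p) h^{1-δ} - c (1-q)/(1-p) h^{γ̃}) K_q'(h) I, where K_q'(s) = s^{q-1}. -/

import Mathlib

/-- The kernel `K_r`: `K_r(s) = log s` if `r = 0`, `s^r/r` otherwise. -/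
noncomputable def Kfun (r s : ℝ) : ℝ := if r = 0 then Real.log s else s ^ r / r

/-- The (real) Hessian of `f` at `x`, as a bilinear expression. -/
noncomputable def D2 {N : ℕ} (f : EuclideanSpace ℝ (Fin N) → ℝ)
    (x v w : EuclideanSpace ℝ (Fin N)) : ℝ :=
  fderiv ℝ (fderiv ℝ f) x v w

/-- Real-Hessian analogue of the `p`-lemma: if `D²h ≥ ε h^{1-δ} I` and
`D²(K_p∘h) ≥ -c h^{p-1+γ̃} I`, then
`D²(K_q∘h) ≥ (ε (q-p)/(1-p) h^{1-δ} - c (1-q)/(1-p) h^{γ̃}) K_q'(h) I`, with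
`K_q'(s) = s^{q-1}`, all inequalities being between quadratic forms. -/
lemma kfun_hasDerivAt (r : ℝ) {s : ℝ} (hs : 0 < s) :
    HasDerivAt (Kfun r) (s ^ (r - 1)) s := by
  rcases eq_or_ne r 0 with hr | hr
  · subst hr
    have := Real.hasDerivAt_log hs.ne'
    have heq : s⁻¹ = s ^ ((0:ℝ) - 1) := by
      rw [zero_sub, Real.rpow_neg_one]
    rw [heq] at this
    refine this.congr_of_eventuallyEq ?_
    filter_upwards [] with t
    simp [Kfun]
  · have h1 : HasDerivAt (fun t : ℝ => t ^ r) (r * s ^ (r - 1)) s :=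
      Real.hasDerivAt_rpow_const (Or.inl hs.ne')
    have h2 := h1.div_const r
    have heq : r * s ^ (r - 1) / r = s ^ (r - 1) := by field_simp
    rw [heq] at h2
    refine h2.congr_of_eventuallyEq ?_
    filter_upwards [] with t
    simp [Kfun, hr]

lemma hessKfun {N : ℕ} {Ω : Set (EuclideanSpace ℝ (Fin N))} (hΩ : IsOpen Ω)
    {h : EuclideanSpace ℝ (Fin N) → ℝ} (hC2 : ContDiffOn ℝ 2 h Ω)
    (hpos : ∀ x ∈ Ω, 0 < h x) (r : ℝ) {x : EuclideanSpace ℝ (Fin N)} (hx : x ∈ Ω)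
    (v : EuclideanSpace ℝ (Fin N)) :
    D2 (fun y => Kfun r (h y)) x v v =
      (h x) ^ (r - 1) * D2 h x v v + (r - 1) * (h x) ^ (r - 2) * (fderiv ℝ h x v) ^ 2 := by
  -- differentiability facts
  have hdiff : ∀ y ∈ Ω, DifferentiableAt ℝ h y := fun y hy =>
    (hC2.contDiffAt (hΩ.mem_nhds hy)).differentiableAt (by norm_num)
  -- step 1: first derivative of Kfun r ∘ h on Ω
  have hfd : ∀ y ∈ Ω, HasFDerivAt (fun z => Kfun r (h z))
      ((h y) ^ (r - 1) • fderiv ℝ h y) y := by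
    intro y hy
    exact (kfun_hasDerivAt r (hpos y hy)).comp_hasFDerivAt y ((hdiff y hy).hasFDerivAt)
  have heq : (fun y => fderiv ℝ (fun z => Kfun r (h z)) y) =ᶠ[nhds x]
      (fun y => (h y) ^ (r - 1) • fderiv ℝ h y) := by
    filter_upwards [hΩ.mem_nhds hx] with y hy
    exact (hfd y hy).fderiv
  have hD2 : D2 (fun y => Kfun r (h y)) x v v =
      fderiv ℝ (fun y => (h y) ^ (r - 1) • fderiv ℝ h y) x v v := by
    unfold D2
    rw [heq.fderiv_eq]
  rw [hD2]
  -- step 2: differentiate the product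
  have hx2 : ContDiffAt ℝ 2 h x := hC2.contDiffAt (hΩ.mem_nhds hx)
  have hL : HasFDerivAt (fun y => fderiv ℝ h y) (fderiv ℝ (fderiv ℝ h) x) x := by
    have : ContDiffAt ℝ 1 (fderiv ℝ h) x := hx2.fderiv_right (by norm_num)
    exact (this.differentiableAt (by norm_num)).hasFDerivAt
  have hφ : HasFDerivAt (fun y => (h y) ^ (r - 1))
      (((r - 1) * (h x) ^ (r - 2)) • fderiv ℝ h x) x := by
    have h1 : HasDerivAt (fun t : ℝ => t ^ (r - 1)) ((r - 1) * (h x) ^ (r - 1 - 1)) (h x) :=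
      Real.hasDerivAt_rpow_const (Or.inl (hpos x hx).ne')
    have h2 := h1.comp_hasFDerivAt x ((hdiff x hx).hasFDerivAt)
    have : r - 1 - 1 = r - 2 := by ring
    rw [this] at h2
    exact h2
  have hprod : HasFDerivAt (fun y => h y ^ (r - 1) • fderiv ℝ h y) _ x := hφ.smul hL
  rw [hprod.fderiv]
  simp [D2, ContinuousLinearMap.smul_apply, ContinuousLinearMap.add_apply,
    ContinuousLinearMap.smulRight_apply]
  ring

theorem stmt4 {N : ℕ} (Ω : Set (EuclideanSpace ℝ (Fin N))) (hΩ : IsOpen Ω)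
    (h : EuclideanSpace ℝ (Fin N) → ℝ) (hC2 : ContDiffOn ℝ 2 h Ω)
    (hpos : ∀ x ∈ Ω, 0 < h x) (hle : ∀ x ∈ Ω, h x ≤ 1)
    (p q δ c γt ε : ℝ) (hp : p ≤ 0) (hδ : 0 < δ) (hc : 0 < c) (hγt : 1 - δ < γt)
    (hpq : p < q) (hq : q ≤ 1) (hε : 0 < ε)
    (hHess : ∀ x ∈ Ω, ∀ v : EuclideanSpace ℝ (Fin N),
      ε * (h x) ^ (1 - δ) * ‖v‖ ^ 2 ≤ D2 h x v v)
    (hKp : ∀ x ∈ Ω, ∀ v : EuclideanSpace ℝ (Fin N),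
      -c * (h x) ^ (p - 1 + γt) * ‖v‖ ^ 2 ≤ D2 (fun y => Kfun p (h y)) x v v) :
    ∀ x ∈ Ω, ∀ v : EuclideanSpace ℝ (Fin N),
      (ε * (q - p) / (1 - p) * (h x) ^ (1 - δ) - c * (1 - q) / (1 - p) * (h x) ^ γt) *
          (h x) ^ (q - 1) * ‖v‖ ^ 2 ≤ D2 (fun y => Kfun q (h y)) x v v := by
  intro x hx v
  have hH : 0 < h x := hpos x hx
  rw [hessKfun hΩ hC2 hpos q hx v]
  have h2 := hKp x hx v
  rw [hessKfun hΩ hC2 hpos p hx v] at h2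
  have h1 := hHess x hx v
  set H := h x with hHdef
  set A := D2 h x v v with hA
  set L := (fderiv ℝ h x) v with hL
  set n := ‖v‖ ^ 2 with hn
  have h1p : (0:ℝ) < 1 - p := by linarith
  have e1 : H ^ (q - p) * H ^ (p - 1) = H ^ (q - 1) := by
    rw [← Real.rpow_add hH]; ring_nf
  have e2 : H ^ (q - p) * H ^ (p - 2) = H ^ (q - 2) := by
    rw [← Real.rpow_add hH]; ring_nf
  have e3 : H ^ (q - p) * H ^ (p - 1 + γt) = H ^ γt * H ^ (q - 1) := by
    rw [← Real.rpow_add hH, ← Real.rpow_add hH]; ring_nf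
  have h1' : ε * (q - p) * (H ^ (1 - δ) * H ^ (q - 1)) * n ≤ (q - p) * (H ^ (q - 1) * A) := by
    have c1 : (0:ℝ) ≤ (q - p) * H ^ (q - 1) :=
      mul_nonneg (by linarith) (Real.rpow_pos_of_pos hH (q-1)).le
    have t := mul_le_mul_of_nonneg_left h1 c1
    nlinarith [t]
  have h2' : -(c * (1 - q) * (H ^ γt * H ^ (q - 1)) * n) ≤
      (1 - q) * (H ^ (q - 1) * A + (p - 1) * H ^ (q - 2) * L ^ 2) := by
    have c2 : (0:ℝ) ≤ (1 - q) * H ^ (q - p) :=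
      mul_nonneg (by linarith) (Real.rpow_pos_of_pos hH (q-p)).le
    have t := mul_le_mul_of_nonneg_left h2 c2
    calc -(c * (1 - q) * (H ^ γt * H ^ (q - 1)) * n)
        = (1 - q) * H ^ (q - p) * (-c * H ^ (p - 1 + γt) * n) := by rw [← e3]; ring
      _ ≤ (1 - q) * H ^ (q - p) * (H ^ (p - 1) * A + (p - 1) * H ^ (p - 2) * L ^ 2) := t
      _ = (1 - q) * (H ^ (q - 1) * A + (p - 1) * H ^ (q - 2) * L ^ 2) := by
          rw [← e1, ← e2]; ring
  rw [← mul_le_mul_iff_of_pos_left h1p]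
  have key : (1 - p) * ((ε * (q - p) / (1 - p) * H ^ (1 - δ) - c * (1 - q) / (1 - p) * H ^ γt)
      * H ^ (q - 1) * n)
      = ε * (q - p) * (H ^ (1 - δ) * H ^ (q - 1)) * n
        - c * (1 - q) * (H ^ γt * H ^ (q - 1)) * n := by
    field_simp
  have key2 : (1 - p) * (H ^ (q - 1) * A + (q - 1) * H ^ (q - 2) * L ^ 2)
      = (q - p) * (H ^ (q - 1) * A)
        + (1 - q) * (H ^ (q - 1) * A + (p - 1) * H ^ (q - 2) * L ^ 2) := by ring
  rw [key, key2]
  linarith [h1', h2']
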